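/- Let μ, ε ∈ {−1,1}, let U ⊆ ℝ³ be open (coordinates indexed by 0,1,2, where the 0-th coordinate plays the role of time and ∂_m denotes the partial derivative in the m-th coordinate), let s : U → ℝ³ be C² and v, w : U → ℝ³ be C¹, satisfying at every point of U: s ·_μ s = μ, v ·_μ v = 1, v ·_μ s = 0, and w = s ×_μ v. Define ψ_m = v ·_μ ∂_m s + i w ·_μ ∂_m s and A_m = w ·_μ ∂_m v for m = 0,1,2. Suppose ζ_1, ζ_2 : U → ℝ are functions such that s satisfies the spin equation ∂_0 s = s ×_μ (∂_1∂_1 s + ε ∂_2∂_2 s) + ζ_2 ∂_1 s − ε ζ_1 ∂_2 s on U. Then on U one has ψ_0 = i(∂_1 ψ_1 + i A_1 ψ_1) + i ε (∂_2 ψ_2 + i A_2 ψ_2) + ζ_2 ψ_1 − ε ζ_1 ψ_2. -/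

import Mathlib

noncomputable section

/-- The inner product `v ·_μ w = μ v₀ w₀ + v₁ w₁ + v₂ w₂` on `ℝ³`. -/
def mdot (μ : ℝ) (v w : Fin 3 → ℝ) : ℝ :=
  μ * v 0 * w 0 + v 1 * w 1 + v 2 * w 2

/-- The standard cross product on `ℝ³`. -/
def cross3 (v w : Fin 3 → ℝ) : Fin 3 → ℝ :=
  ![v 1 * w 2 - v 2 * w 1, v 2 * w 0 - v 0 * w 2, v 0 * w 1 - v 1 * w 0]

/-- The cross product `v ×_μ w = η_μ · (v × w)`, where `η_μ = diag(μ,1,1)`. -/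
def mcross (μ : ℝ) (v w : Fin 3 → ℝ) : Fin 3 → ℝ :=
  ![μ * cross3 v w 0, cross3 v w 1, cross3 v w 2]

/-- Partial derivative in the `m`-th coordinate of an `ℝ³`-valued map on `ℝ³`. -/
def pdV (m : Fin 3) (f : (Fin 3 → ℝ) → (Fin 3 → ℝ)) (x : Fin 3 → ℝ) : Fin 3 → ℝ :=
  fderiv ℝ f x (Pi.single m 1)

/-- Partial derivative in the `m`-th coordinate of a `ℂ`-valued map on `ℝ³`. -/
def pdC (m : Fin 3) (f : (Fin 3 → ℝ) → ℂ) (x : Fin 3 → ℝ) : ℂ :=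
  fderiv ℝ f x (Pi.single m 1)

/-! ### Auxiliary material -/

/-- Partial derivative of a real-valued map. -/
def pd (m : Fin 3) (f : (Fin 3 → ℝ) → ℝ) (x : Fin 3 → ℝ) : ℝ :=
  fderiv ℝ f x (Pi.single m 1)

abbrev pr (i : Fin 3) : (Fin 3 → ℝ) →L[ℝ] ℝ :=
  ContinuousLinearMap.proj (R := ℝ) (φ := fun _ : Fin 3 => ℝ) i

lemma mdot_comm (μ : ℝ) (u v : Fin 3 → ℝ) : mdot μ u v = mdot μ v u := by
  simp [mdot]; ring

lemma mdot_add_right (μ : ℝ) (u p q : Fin 3 → ℝ) :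
    mdot μ u (p + q) = mdot μ u p + mdot μ u q := by
  simp [mdot]; ring

lemma mdot_sub_right (μ : ℝ) (u p q : Fin 3 → ℝ) :
    mdot μ u (p - q) = mdot μ u p - mdot μ u q := by
  simp [mdot]; ring

lemma mdot_smul_right (μ r : ℝ) (u p : Fin 3 → ℝ) :
    mdot μ u (r • p) = r * mdot μ u p := by
  simp [mdot, Pi.smul_apply, smul_eq_mul]; ring

lemma hasFDerivAt_mdot (μ : ℝ) {f g : (Fin 3→ℝ)→(Fin 3→ℝ)} {x}
    (hf : DifferentiableAt ℝ f x) (hg : DifferentiableAt ℝ g x) :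
    HasFDerivAt (fun y => mdot μ (f y) (g y))
      ((μ • (f x 0 • ((pr 0).comp (fderiv ℝ g x)) + g x 0 • ((pr 0).comp (fderiv ℝ f x)))
        + (f x 1 • ((pr 1).comp (fderiv ℝ g x)) + g x 1 • ((pr 1).comp (fderiv ℝ f x))))
        + (f x 2 • ((pr 2).comp (fderiv ℝ g x)) + g x 2 • ((pr 2).comp (fderiv ℝ f x)))) x := by
  have Pf : ∀ i : Fin 3, HasFDerivAt (fun y => f y i) ((pr i).comp (fderiv ℝ f x)) x :=
    fun i => ((pr i).hasFDerivAt).comp x hf.hasFDerivAt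
  have Pg : ∀ i : Fin 3, HasFDerivAt (fun y => g y i) ((pr i).comp (fderiv ℝ g x)) x :=
    fun i => ((pr i).hasFDerivAt).comp x hg.hasFDerivAt
  have h0 : HasFDerivAt (fun y => μ * f y 0 * g y 0)
      (μ • (f x 0 • ((pr 0).comp (fderiv ℝ g x)) + g x 0 • ((pr 0).comp (fderiv ℝ f x)))) x := by
    have := (((Pf 0).const_mul μ).fun_mul (Pg 0))
    convert this using 1
    all_goals try rfl
    ext u
    simp [mul_comm, mul_assoc, mul_left_comm]
  have h1 := (Pf 1).fun_mul (Pg 1)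
  have h2 := (Pf 2).fun_mul (Pg 2)
  have := (h0.fun_add h1).fun_add h2
  convert this using 2 with y
  all_goals rfl

lemma pd_mdot (m : Fin 3) (μ : ℝ) {f g : (Fin 3→ℝ)→(Fin 3→ℝ)} {x}
    (hf : DifferentiableAt ℝ f x) (hg : DifferentiableAt ℝ g x) :
    pd m (fun y => mdot μ (f y) (g y)) x
      = mdot μ (pdV m f x) (g x) + mdot μ (f x) (pdV m g x) := by
  have h := hasFDerivAt_mdot μ hf hg
  simp only [pd, pdV, h.fderiv]
  simp [mdot]
  ring

lemma diffAt_mdot (μ : ℝ) {f g : (Fin 3→ℝ)→(Fin 3→ℝ)} {x}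
    (hf : DifferentiableAt ℝ f x) (hg : DifferentiableAt ℝ g x) :
    DifferentiableAt ℝ (fun y => mdot μ (f y) (g y)) x :=
  (hasFDerivAt_mdot μ hf hg).differentiableAt

lemma pd_constOn {U : Set (Fin 3 → ℝ)} (hU : IsOpen U) {x} (hx : x ∈ U)
    (r : (Fin 3→ℝ)→ℝ) (c : ℝ) (h : ∀ y ∈ U, r y = c) (m : Fin 3) : pd m r x = 0 := by
  have he : r =ᶠ[nhds x] fun _ => c := Filter.eventually_of_mem (hU.mem_nhds hx) h
  rw [pd, he.fderiv_eq]; simp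

lemma pdC_eq (m : Fin 3) {P Q : (Fin 3→ℝ)→ℝ} {x} (hP : DifferentiableAt ℝ P x)
    (hQ : DifferentiableAt ℝ Q x) :
    pdC m (fun y => (P y : ℂ) + Complex.I * (Q y : ℂ)) x
      = (pd m P x : ℂ) + Complex.I * (pd m Q x : ℂ) := by
  have h1 : HasFDerivAt (fun y => (P y : ℂ)) (Complex.ofRealCLM.comp (fderiv ℝ P x)) x :=
    Complex.ofRealCLM.hasFDerivAt.comp x hP.hasFDerivAt
  have h2 : HasFDerivAt (fun y => (Q y : ℂ)) (Complex.ofRealCLM.comp (fderiv ℝ Q x)) x :=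
    Complex.ofRealCLM.hasFDerivAt.comp x hQ.hasFDerivAt
  have h3 := h2.const_mul Complex.I
  have h := h1.fun_add h3
  rw [pdC, h.fderiv]
  simp [pd]

lemma diff_pdV {U : Set (Fin 3 → ℝ)} (hU : IsOpen U) {s : (Fin 3 → ℝ) → (Fin 3 → ℝ)}
    (hs : ContDiffOn ℝ 2 s U) {x} (hx : x ∈ U) (n : Fin 3) :
    DifferentiableAt ℝ (pdV n s) x := by
  have h1 : ContDiffOn ℝ 1 (fderiv ℝ s) U := hs.fderiv_of_isOpen hU (by norm_num)
  have h2 : ContDiffOn ℝ 1 (pdV n s) U := h1.clm_apply contDiffOn_const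
  exact (h2.differentiableOn one_ne_zero).differentiableAt (hU.mem_nhds hx)

lemma algP2 (μ : ℝ) (hμ : μ = 1 ∨ μ = -1) (a b Y : Fin 3 → ℝ) :
    mdot μ b (mcross μ a Y) = - mdot μ (mcross μ a b) Y := by
  obtain rfl | rfl := hμ <;>
  · simp only [mdot, mcross, cross3, Matrix.cons_val_zero, Matrix.cons_val_one,
      Matrix.head_cons, Matrix.cons_val_two, Matrix.tail_cons]
    ring

lemma algP3 (μ : ℝ) (hμ : μ = 1 ∨ μ = -1) (a b Y : Fin 3 → ℝ)
    (ha : mdot μ a a = μ) (hba : mdot μ b a = 0) :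
    mdot μ (mcross μ a b) (mcross μ a Y) = mdot μ b Y := by
  obtain rfl | rfl := hμ <;>
    simp only [mdot, mcross, cross3, Matrix.cons_val_zero, Matrix.cons_val_one,
      Matrix.head_cons, Matrix.cons_val_two, Matrix.tail_cons] at ha hba ⊢
  · linear_combination (b 0 * Y 0 + b 1 * Y 1 + b 2 * Y 2) * ha
      - (a 0 * Y 0 + a 1 * Y 1 + a 2 * Y 2) * hba
  · linear_combination (b 0 * Y 0 - b 1 * Y 1 - b 2 * Y 2) * ha
      + (-(a 0 * Y 0) + a 1 * Y 1 + a 2 * Y 2) * hba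

lemma algP5 (μ : ℝ) (hμ : μ = 1 ∨ μ = -1) (a b : Fin 3 → ℝ) :
    mdot μ a (mcross μ a b) = 0 := by
  obtain rfl | rfl := hμ <;>
  · simp only [mdot, mcross, cross3, Matrix.cons_val_zero, Matrix.cons_val_one,
      Matrix.head_cons, Matrix.cons_val_two, Matrix.tail_cons]
    ring

lemma algP6 (μ : ℝ) (hμ : μ = 1 ∨ μ = -1) (a b : Fin 3 → ℝ) :
    mdot μ b (mcross μ a b) = 0 := by
  obtain rfl | rfl := hμ <;>
  · simp only [mdot, mcross, cross3, Matrix.cons_val_zero, Matrix.cons_val_one,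
      Matrix.head_cons, Matrix.cons_val_two, Matrix.tail_cons]
    ring

lemma algP4 (μ : ℝ) (hμ : μ = 1 ∨ μ = -1) (a b : Fin 3 → ℝ)
    (ha : mdot μ a a = μ) (hb : mdot μ b b = 1) (hba : mdot μ b a = 0) :
    mdot μ (mcross μ a b) (mcross μ a b) = 1 := by
  obtain rfl | rfl := hμ <;>
    simp only [mdot, mcross, cross3, Matrix.cons_val_zero, Matrix.cons_val_one,
      Matrix.head_cons, Matrix.cons_val_two, Matrix.tail_cons] at ha hb hba ⊢
  · linear_combination (b 0 * b 0 + b 1 * b 1 + b 2 * b 2) * ha + hb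
      - (a 0 * b 0 + a 1 * b 1 + a 2 * b 2) * hba
  · linear_combination (b 0 * b 0 - b 1 * b 1 - b 2 * b 2) * ha + hb
      + (-a 0 * b 0 + a 1 * b 1 + a 2 * b 2) * hba

lemma algP1 (μ : ℝ) (hμ : μ = 1 ∨ μ = -1) (a b X Z : Fin 3 → ℝ)
    (ha : mdot μ a a = μ) (hb : mdot μ b b = 1) (hba : mdot μ b a = 0) :
    mdot μ X Z = μ * (mdot μ a X) * (mdot μ a Z) + (mdot μ b X) * (mdot μ b Z)
      + (mdot μ (mcross μ a b) X) * (mdot μ (mcross μ a b) Z) := by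
  obtain rfl | rfl := hμ <;>
    simp only [mdot, mcross, cross3, Matrix.cons_val_zero, Matrix.cons_val_one,
      Matrix.head_cons, Matrix.cons_val_two, Matrix.tail_cons] at ha hb hba ⊢
  · linear_combination ((-((b 0 * b 0 + b 1 * b 1 + b 2 * b 2) * (X 0 * Z 0 + X 1 * Z 1 + X 2 * Z 2)) + (b 0 * Z 0 + b 1 * Z 1 + b 2 * Z 2) * (b 0 * X 0 + b 1 * X 1 + b 2 * X 2))) * ha
      + (-(X 0 * Z 0 + X 1 * Z 1 + X 2 * Z 2) + ((a 0 * Z 0 + a 1 * Z 1 + a 2 * Z 2) * (a 0 * X 0 + a 1 * X 1 + a 2 * X 2))) * hb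
      + ((-((b 0 * Z 0 + b 1 * Z 1 + b 2 * Z 2) * (a 0 * X 0 + a 1 * X 1 + a 2 * X 2)) - (a 0 * Z 0 + a 1 * Z 1 + a 2 * Z 2) * (b 0 * X 0 + b 1 * X 1 + b 2 * X 2) + (a 0 * b 0 + a 1 * b 1 + a 2 * b 2) * (X 0 * Z 0 + X 1 * Z 1 + X 2 * Z 2))) * hba
  · linear_combination (-(-((-b 0 * b 0 + b 1 * b 1 + b 2 * b 2) * (-X 0 * Z 0 + X 1 * Z 1 + X 2 * Z 2)) + (-b 0 * Z 0 + b 1 * Z 1 + b 2 * Z 2) * (-b 0 * X 0 + b 1 * X 1 + b 2 * X 2))) * ha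
      + (-(-X 0 * Z 0 + X 1 * Z 1 + X 2 * Z 2) + -((-a 0 * Z 0 + a 1 * Z 1 + a 2 * Z 2) * (-a 0 * X 0 + a 1 * X 1 + a 2 * X 2))) * hb
      + (-(-((-b 0 * Z 0 + b 1 * Z 1 + b 2 * Z 2) * (-a 0 * X 0 + a 1 * X 1 + a 2 * X 2)) - (-a 0 * Z 0 + a 1 * Z 1 + a 2 * Z 2) * (-b 0 * X 0 + b 1 * X 1 + b 2 * X 2) + (-a 0 * b 0 + a 1 * b 1 + a 2 * b 2) * (-X 0 * Z 0 + X 1 * Z 1 + X 2 * Z 2))) * hba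

theorem stmt10 (μ ε : ℝ) (hμ : μ = 1 ∨ μ = -1) (hε : ε = 1 ∨ ε = -1)
    (U : Set (Fin 3 → ℝ)) (hU : IsOpen U)
    (s v w : (Fin 3 → ℝ) → (Fin 3 → ℝ))
    (hs : ContDiffOn ℝ 2 s U) (hv : ContDiffOn ℝ 1 v U) (hw : ContDiffOn ℝ 1 w U)
    (h1 : ∀ x ∈ U, mdot μ (s x) (s x) = μ)
    (h2 : ∀ x ∈ U, mdot μ (v x) (v x) = 1)
    (h3 : ∀ x ∈ U, mdot μ (v x) (s x) = 0)
    (h4 : ∀ x ∈ U, w x = mcross μ (s x) (v x))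
    (ψ : Fin 3 → (Fin 3 → ℝ) → ℂ)
    (hψ : ∀ m x, ψ m x =
      (mdot μ (v x) (pdV m s x) : ℂ) + Complex.I * (mdot μ (w x) (pdV m s x) : ℂ))
    (A : Fin 3 → (Fin 3 → ℝ) → ℝ)
    (hA : ∀ m x, A m x = mdot μ (w x) (pdV m v x))
    (ζ1 ζ2 : (Fin 3 → ℝ) → ℝ)
    (hspin : ∀ x ∈ U,
      pdV 0 s x = mcross μ (s x) (pdV 1 (pdV 1 s) x + ε • pdV 2 (pdV 2 s) x)
        + ζ2 x • pdV 1 s x - (ε * ζ1 x) • pdV 2 s x) :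
    ∀ x ∈ U,
      ψ 0 x = Complex.I * (pdC 1 (ψ 1) x + Complex.I * (A 1 x : ℂ) * ψ 1 x)
        + Complex.I * (ε : ℂ) * (pdC 2 (ψ 2) x + Complex.I * (A 2 x : ℂ) * ψ 2 x)
        + (ζ2 x : ℂ) * ψ 1 x - (ε : ℂ) * (ζ1 x : ℂ) * ψ 2 x := by
  intro x hx
  -- differentiability facts
  have hsx : DifferentiableAt ℝ s x :=
    ((hs.differentiableOn (by norm_num)).differentiableAt (hU.mem_nhds hx))
  have hvx : DifferentiableAt ℝ v x :=
    ((hv.differentiableOn one_ne_zero).differentiableAt (hU.mem_nhds hx))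
  have hwx : DifferentiableAt ℝ w x :=
    ((hw.differentiableOn one_ne_zero).differentiableAt (hU.mem_nhds hx))
  have hSn : ∀ n : Fin 3, DifferentiableAt ℝ (pdV n s) x := fun n => diff_pdV hU hs hx n
  -- derived pointwise constraints on U
  have C4 : ∀ y ∈ U, mdot μ (s y) (w y) = 0 := fun y hy => by
    rw [h4 y hy]; exact algP5 μ hμ (s y) (v y)
  have C5 : ∀ y ∈ U, mdot μ (v y) (w y) = 0 := fun y hy => by
    rw [h4 y hy]; exact algP6 μ hμ (s y) (v y)
  have C6 : ∀ y ∈ U, mdot μ (w y) (w y) = 1 := fun y hy => by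
    rw [h4 y hy]; exact algP4 μ hμ (s y) (v y) (h1 y hy) (h2 y hy) (h3 y hy)
  -- derivatives of the constraints at x
  have e1 : ∀ m, mdot μ (s x) (pdV m s x) = 0 := by
    intro m
    have key := pd_constOn hU hx (fun y => mdot μ (s y) (s y)) μ h1 m
    rw [pd_mdot m μ hsx hsx] at key
    have hc := mdot_comm μ (pdV m s x) (s x)
    linarith
  have e2 : ∀ m, mdot μ (v x) (pdV m v x) = 0 := by
    intro m
    have key := pd_constOn hU hx (fun y => mdot μ (v y) (v y)) 1 h2 m
    rw [pd_mdot m μ hvx hvx] at key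
    have hc := mdot_comm μ (pdV m v x) (v x)
    linarith
  have e3 : ∀ m, mdot μ (s x) (pdV m v x) = - mdot μ (v x) (pdV m s x) := by
    intro m
    have key := pd_constOn hU hx (fun y => mdot μ (v y) (s y)) 0 h3 m
    rw [pd_mdot m μ hvx hsx] at key
    have hc := mdot_comm μ (pdV m v x) (s x)
    linarith
  have e4 : ∀ m, mdot μ (s x) (pdV m w x) = - mdot μ (w x) (pdV m s x) := by
    intro m
    have key := pd_constOn hU hx (fun y => mdot μ (s y) (w y)) 0 C4 m
    rw [pd_mdot m μ hsx hwx] at key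
    have hc := mdot_comm μ (pdV m s x) (w x)
    linarith
  have e5 : ∀ m, mdot μ (v x) (pdV m w x) = - mdot μ (w x) (pdV m v x) := by
    intro m
    have key := pd_constOn hU hx (fun y => mdot μ (v y) (w y)) 0 C5 m
    rw [pd_mdot m μ hvx hwx] at key
    have hc := mdot_comm μ (pdV m v x) (w x)
    linarith
  have e6 : ∀ m, mdot μ (w x) (pdV m w x) = 0 := by
    intro m
    have key := pd_constOn hU hx (fun y => mdot μ (w y) (w y)) 1 C6 m
    rw [pd_mdot m μ hwx hwx] at key
    have hc := mdot_comm μ (pdV m w x) (w x)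
    linarith
  -- frame completeness specialized: for any X with the dots known
  have hP1 : ∀ X Z : Fin 3 → ℝ, mdot μ X Z
      = μ * (mdot μ (s x) X) * (mdot μ (s x) Z) + (mdot μ (v x) X) * (mdot μ (v x) Z)
        + (mdot μ (w x) X) * (mdot μ (w x) Z) := by
    intro X Z
    have := algP1 μ hμ (s x) (v x) X Z (h1 x hx) (h2 x hx) (h3 x hx)
    rw [← h4 x hx] at this
    exact this
  -- the key products
  have pm : ∀ m, mdot μ (pdV m v x) (pdV m s x)
      = A m x * mdot μ (w x) (pdV m s x) := by
    intro m
    have h := hP1 (pdV m v x) (pdV m s x)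
    rw [e1 m, e2 m, ← hA m x] at h
    rw [h]; ring
  have qm : ∀ m, mdot μ (pdV m w x) (pdV m s x)
      = -(A m x) * mdot μ (v x) (pdV m s x) := by
    intro m
    have h := hP1 (pdV m w x) (pdV m s x)
    rw [e1 m, e5 m, e6 m, ← hA m x] at h
    rw [h]; ring
  -- derivative of ψ
  have hpd : ∀ n m : Fin 3, pdC m (ψ n) x
      = ((mdot μ (pdV m v x) (pdV n s x) + mdot μ (v x) (pdV m (pdV n s) x) : ℝ) : ℂ)
        + Complex.I * ((mdot μ (pdV m w x) (pdV n s x) + mdot μ (w x) (pdV m (pdV n s) x) : ℝ) : ℂ) := by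
    intro n m
    have hfun : ψ n = fun y => ((mdot μ (v y) (pdV n s y) : ℝ) : ℂ)
        + Complex.I * ((mdot μ (w y) (pdV n s y) : ℝ) : ℂ) := funext (fun y => hψ n y)
    rw [hfun, pdC_eq m (diffAt_mdot μ hvx (hSn n)) (diffAt_mdot μ hwx (hSn n)),
        pd_mdot m μ hvx (hSn n), pd_mdot m μ hwx (hSn n)]
  -- the spin equation, dotted with v and w
  have hsp := hspin x hx
  have hc2 : mdot μ (v x) (mcross μ (s x) (pdV 1 (pdV 1 s) x + ε • pdV 2 (pdV 2 s) x))
      = - mdot μ (w x) (pdV 1 (pdV 1 s) x + ε • pdV 2 (pdV 2 s) x) := by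
    rw [algP2 μ hμ (s x) (v x) _, ← h4 x hx]
  have hc3 : mdot μ (w x) (mcross μ (s x) (pdV 1 (pdV 1 s) x + ε • pdV 2 (pdV 2 s) x))
      = mdot μ (v x) (pdV 1 (pdV 1 s) x + ε • pdV 2 (pdV 2 s) x) := by
    have := algP3 μ hμ (s x) (v x) (pdV 1 (pdV 1 s) x + ε • pdV 2 (pdV 2 s) x)
      (h1 x hx) (h3 x hx)
    rw [← h4 x hx] at this
    exact this
  have Eα : mdot μ (v x) (pdV 0 s x)
      = -(mdot μ (w x) (pdV 1 (pdV 1 s) x) + ε * mdot μ (w x) (pdV 2 (pdV 2 s) x))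
        + ζ2 x * mdot μ (v x) (pdV 1 s x) - (ε * ζ1 x) * mdot μ (v x) (pdV 2 s x) := by
    rw [hsp, mdot_sub_right, mdot_add_right, mdot_smul_right, mdot_smul_right, hc2,
        mdot_add_right, mdot_smul_right]
  have Eβ : mdot μ (w x) (pdV 0 s x)
      = (mdot μ (v x) (pdV 1 (pdV 1 s) x) + ε * mdot μ (v x) (pdV 2 (pdV 2 s) x))
        + ζ2 x * mdot μ (w x) (pdV 1 s x) - (ε * ζ1 x) * mdot μ (w x) (pdV 2 s x) := by
    rw [hsp, mdot_sub_right, mdot_add_right, mdot_smul_right, mdot_smul_right, hc3,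
        mdot_add_right, mdot_smul_right]
  rw [hψ 0 x, hψ 1 x, hψ 2 x, hpd 1 1, hpd 2 2, pm 1, pm 2, qm 1, qm 2, Eα, Eβ]
  push_cast
  linear_combination (-(((mdot μ (w x) (pdV 1 (pdV 1 s) x) : ℂ))
      + (ε:ℂ) * ((mdot μ (w x) (pdV 2 (pdV 2 s) x) : ℂ)))
    - (((A 1 x : ℂ)) * ((mdot μ (w x) (pdV 1 s x) : ℂ))
      + (ε:ℂ) * ((A 2 x : ℂ)) * ((mdot μ (w x) (pdV 2 s x) : ℂ))) * Complex.I) * Complex.I_sq
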